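/- Let f and g be negative convex increasing functions on ℝ_{<0}. If lim_{c→+∞} P(f, g+c) = f pointwise on ℝ_{<0}, then lim_{t→−∞} f(t)/t ≥ lim_{t→−∞} g(t)/t. -/

import Mathlib

open Filter MeasureTheory Metric Set
open scoped ENNReal Topology

noncomputable section

/-- The convex envelope `P(f, g+c)(t)`: the supremum at `t` of all convex functions on
`ℝ_{<0}` lying below `min(f, g+c)` there. -/
def convEnv1 (f g : ℝ → ℝ) (c : ℝ) (t : ℝ) : EReal :=
  ⨆ (u : ℝ → ℝ) (_ : ConvexOn ℝ (Iio (0:ℝ)) u ∧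
      ∀ s ∈ Iio (0:ℝ), u s ≤ min (f s) (g s + c)), ((u t : ℝ) : EReal)

/-- The slope at infinity `lim_{t→-∞} h(t)/t`, as a `limsup` in `EReal` (for convex
increasing `h` the limit exists in `[0,+∞]`). -/
def slopeAtBot (h : ℝ → ℝ) : EReal :=
  Filter.limsup (fun t : ℝ => ((h t / t : ℝ) : EReal)) atBot

/-- For negative convex increasing functions `f, g` on `ℝ_{<0}`, if
`lim_{c→∞} P(f,g+c) = f` pointwise, then `lim_{t→-∞} f(t)/t ≥ lim_{t→-∞} g(t)/t`. -/
theorem slope_of_convEnv1_tendsto (f g : ℝ → ℝ)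
    (hfconv : ConvexOn ℝ (Iio (0:ℝ)) f) (hgconv : ConvexOn ℝ (Iio (0:ℝ)) g)
    (hfmono : MonotoneOn f (Iio (0:ℝ))) (hgmono : MonotoneOn g (Iio (0:ℝ)))
    (hfneg : ∀ t < (0:ℝ), f t < 0) (hgneg : ∀ t < (0:ℝ), g t < 0)
    (hconv : ∀ t < (0:ℝ),
      Tendsto (fun c : ℝ => convEnv1 f g c t) atTop (𝓝 ((f t : ℝ) : EReal))) :
    slopeAtBot g ≤ slopeAtBot f := by
  -- Main step: for every real `M` strictly below `slopeAtBot g`, and every `t0 < -1`,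
  -- we have `f t0 ≤ f (-1) + M * (1 + t0)`.
  have key : ∀ M : ℝ, (M : EReal) < slopeAtBot g →
      ∀ t0 : ℝ, t0 < -1 → f t0 ≤ f (-1) + M * (1 + t0) := by
    intro M hM t0 ht0
    have ht0' : t0 < 0 := by linarith
    -- get `g s < M * s` frequently at -∞
    have hfreq0 : ∃ᶠ s in atBot, (M : EReal) < ((g s / s : ℝ) : EReal) :=
      frequently_lt_of_lt_limsup (by isBoundedDefault) hM
    have hfreq : ∃ᶠ s in atBot, g s < M * s := by
      refine (hfreq0.and_eventually (eventually_lt_atBot (0:ℝ))).mono ?_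
      rintro s ⟨h1, h2⟩
      have h1' : M < g s / s := by exact_mod_cast h1
      have := mul_lt_mul_of_neg_right h1' h2
      rwa [div_mul_cancel₀ _ h2.ne] at this
    -- it suffices to prove the bound up to any ε > 0
    by_contra hcon
    push_neg at hcon
    set B : ℝ := f (-1) + M * (1 + t0) with hB
    set ε : ℝ := (f t0 - B) / 2 with hε
    have hεpos : 0 < ε := by simp only [hε]; linarith
    -- for each c, bound the envelope at t0 by B + ε
    have hc : ∀ c : ℝ, convEnv1 f g c t0 ≤ ((B + ε : ℝ) : EReal) := by
      intro c
      -- the affine interpolation coefficient φ s = (-1 - t0)/(-1 - s)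
      set φ : ℝ → ℝ := fun s => (-1 - t0) / (-1 - s) with hφdef
      set F : ℝ → ℝ := fun s => φ s * (M * s + c) + (1 - φ s) * f (-1) with hFdef
      -- F tends to M * (t0 + 1) + f (-1) = B as s → -∞
      have h1 : Tendsto (fun s : ℝ => (-1 - s)⁻¹) atBot (𝓝 0) := by
        apply Tendsto.comp tendsto_inv_atTop_zero
        exact tendsto_atTop_add_const_left _ (-1) tendsto_neg_atBot_atTop
      have hφ : Tendsto φ atBot (𝓝 0) := by
        have := h1.const_mul (-1 - t0)
        simpa [hφdef, div_eq_mul_inv] using this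
      have hφs : Tendsto (fun s => φ s * s) atBot (𝓝 (t0 + 1)) := by
        have h2 : Tendsto (fun s : ℝ => (-1 - t0) * ((-1) * (-1 - s)⁻¹ - 1)) atBot
            (𝓝 ((-1 - t0) * ((-1) * 0 - 1))) :=
          ((h1.const_mul (-1)).sub_const 1).const_mul _
        have h3 : (fun s : ℝ => (-1 - t0) * ((-1) * (-1 - s)⁻¹ - 1)) =ᶠ[atBot]
            (fun s => φ s * s) := by
          filter_upwards [eventually_lt_atBot (-1 : ℝ)] with s hs
          have hne : (-1 - s) ≠ 0 := by linarith
          simp only [hφdef]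
          field_simp
          ring
        have := h2.congr' h3
        convert this using 2
        ring
      have hF : Tendsto F atBot (𝓝 B) := by
        have : Tendsto (fun s => M * (φ s * s) + c * φ s + (1 - φ s) * f (-1)) atBot
            (𝓝 (M * (t0 + 1) + c * 0 + (1 - 0) * f (-1))) :=
          ((hφs.const_mul M).add (hφ.const_mul c)).add
            ((tendsto_const_nhds.sub hφ).mul_const _)
        have heq : (fun s => M * (φ s * s) + c * φ s + (1 - φ s) * f (-1)) = F := by
          funext s; simp only [hFdef]; ring
        rw [heq] at this
        convert this using 2
        simp only [hB]; ring
      have hev : ∀ᶠ s in atBot, F s ≤ B + ε :=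
        hF.eventually (eventually_le_nhds (by linarith))
      obtain ⟨s, hgs, hst0, hFs⟩ :=
        (hfreq.and_eventually ((eventually_lt_atBot t0).and hev)).exists
      -- now bound every admissible u at t0
      have hs0 : s < 0 := by linarith
      have hsne : (-1 - s) ≠ 0 := by linarith
      refine iSup_le fun u => iSup_le fun hu => ?_
      rw [EReal.coe_le_coe_iff]
      have ha0 : 0 ≤ φ s := div_nonneg (by linarith) (by linarith)
      have ha1 : φ s ≤ 1 := by
        rw [hφdef, div_le_one (by linarith : (0:ℝ) < -1 - s)]; linarith
      have hmem_s : s ∈ Iio (0:ℝ) := hs0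
      have hmem1 : (-1 : ℝ) ∈ Iio (0:ℝ) := by norm_num
      have hcx := hu.1.2 hmem_s hmem1 ha0 (by linarith : (0:ℝ) ≤ 1 - φ s) (by ring)
      simp only [smul_eq_mul] at hcx
      have hpt : φ s * s + (1 - φ s) * (-1) = t0 := by
        simp only [hφdef]; field_simp; ring
      rw [hpt] at hcx
      have hus : u s ≤ g s + c := (hu.2 s hmem_s).trans (min_le_right _ _)
      have hu1 : u (-1) ≤ f (-1) := (hu.2 (-1) hmem1).trans (min_le_left _ _)
      have h3 : φ s * u s ≤ φ s * (M * s + c) :=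
        mul_le_mul_of_nonneg_left (by linarith) ha0
      have h4 : (1 - φ s) * u (-1) ≤ (1 - φ s) * f (-1) :=
        mul_le_mul_of_nonneg_left hu1 (by linarith)
      have : u t0 ≤ F s := by simp only [hFdef]; linarith
      linarith
    -- pass to the limit in c
    have hle : ((f t0 : ℝ) : EReal) ≤ ((B + ε : ℝ) : EReal) :=
      le_of_tendsto (hconv t0 ht0') (Eventually.of_forall hc)
    rw [EReal.coe_le_coe_iff] at hle
    simp only [hε] at hle
    linarith
  -- conclude: slopeAtBot g ≤ slopeAtBot f
  by_contra h
  push_neg at h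
  obtain ⟨M, hM1, hM2⟩ := EReal.exists_between_coe_real h
  -- show (M : EReal) ≤ slopeAtBot f, contradicting hM1
  have hMf : (M : EReal) ≤ slopeAtBot f := by
    by_contra h'
    push_neg at h'
    obtain ⟨b, hb1, hb2⟩ := EReal.exists_between_coe_real h'
    have hbM : b < M := by exact_mod_cast hb2
    -- eventually b < f t / t at -∞
    have hT : Tendsto (fun t : ℝ => (f (-1) + M) / t + M) atBot (𝓝 M) := by
      have hinv : Tendsto (fun t : ℝ => t⁻¹) atBot (𝓝 0) := by
        have h1 : Tendsto (fun t : ℝ => -t) atBot atTop := tendsto_neg_atBot_atTop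
        have h2 : Tendsto (fun t : ℝ => (-t)⁻¹) atBot (𝓝 0) :=
          (tendsto_inv_atTop_zero (𝕜 := ℝ)).comp h1
        have h3 := h2.neg
        rw [neg_zero] at h3
        refine h3.congr fun t => ?_
        rw [inv_neg, neg_neg]
      have h0 : Tendsto (fun t : ℝ => (f (-1) + M) * t⁻¹) atBot (𝓝 ((f (-1) + M) * 0)) :=
        hinv.const_mul _
      have := h0.add_const M
      simpa [div_eq_mul_inv] using this
    have hev : ∀ᶠ t in atBot, (b : EReal) ≤ ((f t / t : ℝ) : EReal) := by
      filter_upwards [eventually_lt_atBot (-1 : ℝ),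
        hT.eventually (eventually_gt_nhds hbM)] with t ht hbt
      have ht0 : t < 0 := by linarith
      have hkey := key M hM2 t ht
      have hdiv : (f (-1) + M * (1 + t)) / t ≤ f t / t :=
        div_le_div_of_nonpos_of_le ht0.le hkey
      have heq : (f (-1) + M * (1 + t)) / t = (f (-1) + M) / t + M := by
        have htne : t ≠ 0 := ht0.ne
        field_simp
        ring
      rw [heq] at hdiv
      have : b ≤ f t / t := le_trans (le_of_lt hbt) hdiv
      exact_mod_cast this
    have : (b : EReal) ≤ slopeAtBot f :=
      le_limsup_of_frequently_le hev.frequently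
    exact absurd this (not_le.mpr hb1)
  exact absurd hM1 (not_lt.mpr hMf)

end
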